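/- Let G and G' be simple graphs on the same finite vertex set V with the same degree sequence and G ≠ G'. Then the edge set of the symmetric difference E(G) △ E(G') can be partitioned into the edge sets of alternating circuits. -/

import Mathlib

open SimpleGraph

variable {V : Type*}

/-- Degree of `v` in `G`, via `Set.ncard`. -/
noncomputable def gdeg (G : SimpleGraph V) (v : V) : ℕ := (G.neighborSet v).ncard

/-- `G` realizes the degree sequence `d`. -/
def IsRealization (G : SimpleGraph V) (d : V → ℕ) : Prop := ∀ v, gdeg G v = d v

/-- Number of crossing edges of `G` w.r.t. the bipartition `(U, W)`. -/
noncomputable def crossCount (U W : Set V) (G : SimpleGraph V) : ℕ :=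
  {e ∈ G.edgeSet | ∃ u ∈ U, ∃ w ∈ W, e = s(u, w)}.ncard

/-- Number of edges of `G` with one endpoint in `P` and the other in `Q`. -/
noncomputable def eCount (G : SimpleGraph V) (P Q : Set V) : ℕ :=
  {e ∈ G.edgeSet | ∃ p ∈ P, ∃ q ∈ Q, e = s(p, q)}.ncard

/-- `r(G, G')`, the number of edges of `G` that are not edges of `G'`. -/
noncomputable def rdist (G G' : SimpleGraph V) : ℕ := (G.edgeSet \ G'.edgeSet).ncard

/-- `G'` is obtained from `G` by a swap all of whose four vertices lie in `A`. -/
def IsSwapWithin (A : Set V) (G G' : SimpleGraph V) : Prop :=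
  ∃ a b c d : V, a ∈ A ∧ b ∈ A ∧ c ∈ A ∧ d ∈ A ∧
    a ≠ b ∧ a ≠ c ∧ a ≠ d ∧ b ≠ c ∧ b ≠ d ∧ c ≠ d ∧
    G.Adj a b ∧ G.Adj c d ∧ ¬ G.Adj b c ∧ ¬ G.Adj a d ∧
    G'.edgeSet = (G.edgeSet \ {s(a, b), s(c, d)}) ∪ {s(b, c), s(a, d)}

/-- `G'` is obtained from `G` by a swap. -/
def IsSwap (G G' : SimpleGraph V) : Prop := IsSwapWithin Set.univ G G'

/-- `G'` is obtained from `G` by a double swap (two simultaneous disjoint swaps). -/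
def IsDoubleSwap (G G' : SimpleGraph V) : Prop :=
  ∃ a b c d e f g h : V,
    List.Pairwise (· ≠ ·) [a, b, c, d, e, f, g, h] ∧
    G.Adj a b ∧ G.Adj c d ∧ G.Adj e f ∧ G.Adj g h ∧
    ¬ G.Adj b c ∧ ¬ G.Adj a d ∧ ¬ G.Adj f g ∧ ¬ G.Adj e h ∧
    G'.edgeSet = (G.edgeSet \ {s(a, b), s(c, d), s(e, f), s(g, h)}) ∪
      {s(b, c), s(a, d), s(f, g), s(e, h)}

/-- The `i`-th edge of the closed walk whose vertices are listed (cyclically) by `c`. -/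
def stepEdge (c : List V) (i : Fin c.length) : Sym2 V :=
  s(c.get i, c.get ⟨(i.val + 1) % c.length, Nat.mod_lt _ i.pos⟩)

/-- The set of edges of the closed walk listed by `c`. -/
def circuitEdges (c : List V) : Set (Sym2 V) := Set.range (stepEdge c)

/-- The vertex list `c` describes an alternating circuit of the pair `(G, G')`:
a closed walk of even positive length, with pairwise distinct edges, whose edges lie
alternately in `E(G) \ E(G')` and `E(G') \ E(G)`, visiting no vertex more than twice. -/
def IsAltCircuit (G G' : SimpleGraph V) (c : List V) : Prop :=
  0 < c.length ∧ Even c.length ∧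
  (∀ i j : Fin c.length, stepEdge c i = stepEdge c j → i = j) ∧
  (∀ i : Fin c.length, i.val % 2 = 0 → stepEdge c i ∈ G.edgeSet \ G'.edgeSet) ∧
  (∀ i : Fin c.length, i.val % 2 = 1 → stepEdge c i ∈ G'.edgeSet \ G.edgeSet) ∧
  (∀ v : V, {i : Fin c.length | c.get i = v}.ncard ≤ 2)

/-- A decomposition of `E(G) △ E(G')` into (edge sets of) alternating circuits. -/
def IsAltCircuitDecomp (G G' : SimpleGraph V) (𝒞 : Finset (List V)) : Prop :=
  (∀ c ∈ 𝒞, IsAltCircuit G G' c) ∧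
  (∀ c ∈ 𝒞, ∀ c' ∈ 𝒞, c ≠ c' → Disjoint (circuitEdges c) (circuitEdges c')) ∧
  (⋃ c ∈ 𝒞, circuitEdges c) = symmDiff G.edgeSet G'.edgeSet

/-- Number of edges of `G` whose endpoints have classes `P` and `Q` under `π`. -/
noncomputable def wcount {C : Type*} (π : V → C) (G : SimpleGraph V) (P Q : C) : ℕ :=
  {e ∈ G.edgeSet | ∃ x y : V, e = s(x, y) ∧ π x = P ∧ π y = Q}.ncard

/-- Sum of the degree sequence over a class. -/
noncomputable def Dsum (d : V → ℕ) (U : Set V) : ℕ := ∑ᶠ v ∈ U, d v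

/-- `G` is weakly consistent with the cycle skeleton on the classes `U 0, …, U (n-1)`. -/
def WeaklyCycleConsistent (n : ℕ) [NeZero n] (U : Fin n → Set V) (G : SimpleGraph V) : Prop :=
  ∀ e ∈ G.edgeSet, ∃ (i : Fin n) (x y : V), e = s(x, y) ∧ x ∈ U i ∧ y ∈ U (i + 1)

/-- `G` is weakly consistent with the skeleton graph `S` on the classes `U`. -/
def WeaklyConsistent {C : Type*} (U : C → Set V) (S : SimpleGraph C) (G : SimpleGraph V) : Prop :=
  ∀ e ∈ G.edgeSet, ∃ (P Q : C) (x y : V), S.Adj P Q ∧ e = s(x, y) ∧ x ∈ U P ∧ y ∈ U Q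

/-- `G'` is obtained from `G` by an `F`-swap all of whose vertices lie in `A`:
the edges and non-chord-restricted non-edges are exchanged along an alternating
circuit of chords `c` in which every parity-crossing non-circuit pair is forbidden. -/
def IsFSwapWithin (A : Set V) (F : Set (Sym2 V)) (G G' : SimpleGraph V) : Prop :=
  ∃ c : List V, (∀ v ∈ c, v ∈ A) ∧ 0 < c.length ∧ Even c.length ∧
    (∀ i j : Fin c.length, stepEdge c i = stepEdge c j → i = j) ∧
    (∀ i : Fin c.length, i.val % 2 = 0 → stepEdge c i ∈ G.edgeSet) ∧
    (∀ i : Fin c.length, i.val % 2 = 1 → stepEdge c i ∉ G.edgeSet ∧ stepEdge c i ∉ F) ∧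
    (∀ i j : Fin c.length, i.val % 2 ≠ j.val % 2 → c.get i ≠ c.get j →
      s(c.get i, c.get j) ∉ circuitEdges c → s(c.get i, c.get j) ∈ F) ∧
    G'.edgeSet = (G.edgeSet \ {e | ∃ i : Fin c.length, i.val % 2 = 0 ∧ e = stepEdge c i}) ∪
      {e | ∃ i : Fin c.length, i.val % 2 = 1 ∧ e = stepEdge c i}
namespace AltAux

open Finset

variable {V : Type*} [DecidableEq V]

/-- `i`-th edge of an open trail given by `f`. -/
def te (f : ℕ → V) (i : ℕ) : Sym2 V := s(f i, f (i+1))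

/-- `i`-th edge of the cyclic walk of length `n` given by `f`. -/
def ce (f : ℕ → V) (n i : ℕ) : Sym2 V := s(f i, f ((i+1) % n))

def TrailP (R B : Finset (Sym2 V)) (f : ℕ → V) (k : ℕ) : Prop :=
  (∀ i j, i < k → j < k → te f i = te f j → i = j) ∧
  ∀ i < k, (i % 2 = 0 → te f i ∈ R) ∧ (i % 2 = 1 → te f i ∈ B)

def CircP (R B : Finset (Sym2 V)) (f : ℕ → V) (n : ℕ) : Prop :=
  0 < n ∧ n % 2 = 0 ∧
  (∀ i j, i < n → j < n → ce f n i = ce f n j → i = j) ∧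
  ∀ i < n, (i % 2 = 0 → ce f n i ∈ R) ∧ (i % 2 = 1 → ce f n i ∈ B)

/-- Key boundary identity for counting incidences along an open trail. -/
lemma key_id (f : ℕ → V) (v : V) (k : ℕ) (hl : ∀ i < k, f i ≠ f (i+1)) :
    (((range k).filter (fun i => i % 2 = 0 ∧ v ∈ te f i)).card
      + (if k % 2 = 0 ∧ f k = v then 1 else 0))
    = (((range k).filter (fun i => i % 2 = 1 ∧ v ∈ te f i)).card
      + ((if f 0 = v then 1 else 0) + (if k % 2 = 1 ∧ f k = v then 1 else 0))) := by
  induction k with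
  | zero => simp
  | succ k ih =>
    have hk : f k ≠ f (k+1) := hl k (by omega)
    have ih' := ih (fun i hi => hl i (by omega))
    have hnotmem : k ∉ range k := by simp
    have hmem : v ∈ te f k ↔ (f k = v ∨ f (k+1) = v) := by
      simp [te, Sym2.mem_iff, eq_comm]
    rw [range_add_one, filter_insert, filter_insert]
    have hp : (k+1) % 2 = 1 - k % 2 := by omega
    rcases Nat.mod_two_eq_zero_or_one k with h2 | h2 <;>
    by_cases b1 : f k = v <;> by_cases b2 : f (k+1) = v <;> by_cases b3 : f 0 = v <;>
    first
      | exact absurd (b1.trans b2.symm) hk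
      | (simp only [hmem, hp, h2, b1, b2, b3, apply_ite Finset.card,
           card_insert_of_notMem hnotmem] at ih' ⊢
         norm_num at ih' ⊢ <;> omega)

/-- The number of used edges of a given parity at `v` is at most the number of
edges of the corresponding colour at `v`. -/
lemma used_le (f : ℕ → V) (k : ℕ) (v : V)
    (hinj : ∀ i j, i < k → j < k → te f i = te f j → i = j)
    (S : Finset (Sym2 V)) (p : ℕ) (hp : ∀ i < k, i % 2 = p → te f i ∈ S) :
    ((range k).filter (fun i => i % 2 = p ∧ v ∈ te f i)).card
      ≤ (S.filter (v ∈ ·)).card := by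
  apply Finset.card_le_card_of_injOn (te f)
  · intro i hi
    simp only [mem_coe, mem_filter, mem_range] at hi ⊢
    exact ⟨hp i hi.1 hi.2.1, hi.2.2⟩
  · intro i hi j hj hij
    simp only [coe_filter, Set.mem_setOf_eq, mem_range] at hi hj
    exact hinj i j hi.1 hj.1 hij

lemma exists_unused (f : ℕ → V) (k : ℕ) (v : V)
    (hinj : ∀ i j, i < k → j < k → te f i = te f j → i = j)
    (S : Finset (Sym2 V)) (p : ℕ) (hp : ∀ i < k, i % 2 = p → te f i ∈ S)
    (hlt : ((range k).filter (fun i => i % 2 = p ∧ v ∈ te f i)).card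
      < (S.filter (v ∈ ·)).card) :
    ∃ b ∈ S, v ∈ b ∧ ∀ i < k, i % 2 = p → te f i ≠ b := by
  set T := ((range k).filter (fun i => i % 2 = p ∧ v ∈ te f i)).image (te f) with hT
  have hTcard : T.card ≤ ((range k).filter (fun i => i % 2 = p ∧ v ∈ te f i)).card :=
    Finset.card_image_le
  have : ¬ (S.filter (v ∈ ·) ⊆ T) := fun hsub => by
    have := Finset.card_le_card hsub
    omega
  obtain ⟨b, hb, hbT⟩ := Finset.not_subset.mp this
  simp only [mem_filter] at hb
  refine ⟨b, hb.1, hb.2, fun i hi hip hbe => hbT ?_⟩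
  rw [hT, ← hbe]
  apply Finset.mem_image_of_mem
  simp only [mem_filter, mem_range]
  exact ⟨hi, hip, hbe ▸ hb.2⟩

lemma trail_nonloop {R B : Finset (Sym2 V)} (hloop : ∀ e ∈ R ∪ B, ¬ e.IsDiag)
    {f : ℕ → V} {k : ℕ} (ht : TrailP R B f k) : ∀ i < k, f i ≠ f (i+1) := by
  intro i hi
  have h2 := (ht.2 i hi)
  have : te f i ∈ R ∪ B := by
    rcases Nat.mod_two_eq_zero_or_one i with h | h
    · exact mem_union_left _ (h2.1 h)
    · exact mem_union_right _ (h2.2 h)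
  have := hloop _ this
  rw [te, Sym2.mk_isDiag_iff] at this
  exact this

lemma trail_extend {R B : Finset (Sym2 V)} (hd : Disjoint R B)
    (hbal : ∀ v, (R.filter (v ∈ ·)).card = (B.filter (v ∈ ·)).card)
    (hloop : ∀ e ∈ R ∪ B, ¬ e.IsDiag)
    {f : ℕ → V} {k : ℕ} (ht : TrailP R B f k) (hopen : k % 2 = 1 ∨ (k % 2 = 0 ∧ f k ≠ f 0)) :
    ∃ g : ℕ → V, TrailP R B g (k+1) := by
  have hnl := trail_nonloop hloop ht
  have hkey := key_id f (f k) k hnl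
  -- find an unused edge b at v := f k of the right colour
  have hmain : ∃ b, b ∈ (if k % 2 = 1 then B else R) ∧ f k ∈ b ∧
      ∀ i < k, i % 2 = (if k % 2 = 1 then 1 else 0) → te f i ≠ b := by
    rcases hopen with hk1 | ⟨hk0, hne⟩
    · simp only [hk1, if_pos rfl]
      apply exists_unused f k (f k) ht.1 B 1 (fun i hi hip => (ht.2 i hi).2 hip)
      have hle := used_le f k (f k) ht.1 R 0 (fun i hi hip => (ht.2 i hi).1 hip)
      have := hbal (f k)
      simp only [hk1] at hkey
      norm_num at hkey
      split_ifs at hkey <;> omega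
    · have : ¬ (f 0 = f k) := fun h => hne h.symm
      simp only [hk0, this] at hkey
      norm_num at hkey
      simp only [if_neg (by omega : ¬ k % 2 = 1)]
      apply exists_unused f k (f k) ht.1 R 0 (fun i hi hip => (ht.2 i hi).1 hip)
      have hle := used_le f k (f k) ht.1 B 1 (fun i hi hip => (ht.2 i hi).2 hip)
      have := hbal (f k)
      omega
  obtain ⟨b, hbS, hbv, hbnew⟩ := hmain
  obtain ⟨w, hw⟩ : ∃ w, b = s(f k, w) := by
    rw [Sym2.mem_iff_exists] at hbv
    exact hbv
  set g := fun i => if i = k + 1 then w else f i with hgdef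
  have hg : ∀ i, i ≤ k → g i = f i := fun i hi => by
    simp only [hgdef]; rw [if_neg (by omega)]
  have hte : ∀ i, i < k → te g i = te f i := fun i hi => by
    unfold te; rw [hg i (by omega), hg (i+1) (by omega)]
  have htek : te g k = b := by
    unfold te
    rw [hg k le_rfl]
    simp only [hgdef, if_pos rfl]
    exact hw.symm
  have hbcol : (k % 2 = 0 → b ∈ R) ∧ (k % 2 = 1 → b ∈ B) := by
    constructor <;> intro hp
    · rw [if_neg (by omega)] at hbS; exact hbS
    · rw [if_pos hp] at hbS; exact hbS
  have hpnew : ∀ i < k, i % 2 = k % 2 → te f i ≠ b := by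
    intro i hi hip
    apply hbnew i hi
    rcases Nat.mod_two_eq_zero_or_one k with h | h
    · rw [if_neg (by omega)]; omega
    · rw [if_pos h]; omega
  have hcontra : ∀ i, i < k → te f i = b → False := by
    intro i hik he
    rcases Nat.mod_two_eq_zero_or_one i with hi2 | hi2 <;>
      rcases Nat.mod_two_eq_zero_or_one k with hk2 | hk2
    · exact hpnew i hik (by omega) he
    · have h1 : te f i ∈ R := (ht.2 i hik).1 hi2
      have h2 : te f i ∈ B := by rw [he]; exact hbcol.2 hk2
      exact Finset.disjoint_left.mp hd h1 h2
    · have h1 : te f i ∈ B := (ht.2 i hik).2 hi2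
      have h2 : te f i ∈ R := by rw [he]; exact hbcol.1 hk2
      exact Finset.disjoint_left.mp hd h2 h1
    · exact hpnew i hik (by omega) he
  refine ⟨g, ?_, ?_⟩
  · intro i j hi hj he
    rcases Nat.lt_or_ge i k with hik | hik <;> rcases Nat.lt_or_ge j k with hjk | hjk
    · exact ht.1 i j hik hjk (by rwa [hte i hik, hte j hjk] at he)
    · have hj' : j = k := by omega
      subst hj'
      rw [hte i hik, htek] at he
      exact absurd he (fun h => hcontra i hik h)
    · have hi' : i = k := by omega
      subst hi'
      rw [hte j hjk, htek] at he
      exact absurd he.symm (fun h => hcontra j hjk h)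
    · omega
  · intro i hi
    rcases Nat.lt_or_ge i k with hik | hik
    · rw [hte i hik]
      exact ht.2 i hik
    · have hik' : i = k := by omega
      subst hik'
      rw [htek]
      exact hbcol


lemma trail_length_le {R B : Finset (Sym2 V)} {f : ℕ → V} {k : ℕ}
    (ht : TrailP R B f k) : k ≤ (R ∪ B).card := by
  have : k = (range k).card := by simp
  rw [this]
  apply Finset.card_le_card_of_injOn (te f)
  · intro i hi
    simp only [mem_coe, mem_range] at hi
    rcases Nat.mod_two_eq_zero_or_one i with h | h
    · exact mem_union_left _ ((ht.2 i hi).1 h)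
    · exact mem_union_right _ ((ht.2 i hi).2 h)
  · intro i hi j hj hij
    simp only [coe_range, Set.mem_Iio] at hi hj
    exact ht.1 i j hi hj hij

lemma exists_closed_trail {R B : Finset (Sym2 V)} (hd : Disjoint R B)
    (hbal : ∀ v, (R.filter (v ∈ ·)).card = (B.filter (v ∈ ·)).card)
    (hloop : ∀ e ∈ R ∪ B, ¬ e.IsDiag) (hR : R.Nonempty) :
    ∃ f : ℕ → V, ∃ n, 0 < n ∧ n % 2 = 0 ∧ f n = f 0 ∧ TrailP R B f n := by
  obtain ⟨e, he⟩ := hR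
  revert he
  induction e using Sym2.ind with | _ a b => ?_
  intro he
  have hab : a ≠ b := by
    have := hloop _ (mem_union_left _ he)
    rwa [Sym2.mk_isDiag_iff] at this
  have hstart : TrailP R B (fun i => if i = 0 then a else b) 1 := by
    constructor
    · intro i j hi hj _
      omega
    · intro i hi
      have : i = 0 := by omega
      subst this
      refine ⟨fun _ => ?_, fun h => by omega⟩
      simpa [te] using he
  have aux : ∀ m : ℕ, ∀ f : ℕ → V, ∀ k, 0 < k → TrailP R B f k →
      (R ∪ B).card + 1 ≤ m + k →
      ∃ f : ℕ → V, ∃ n, 0 < n ∧ n % 2 = 0 ∧ f n = f 0 ∧ TrailP R B f n := by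
    intro m
    induction m with
    | zero =>
      intro f k hk ht hm
      have := trail_length_le ht
      omega
    | succ m ih =>
      intro f k hk ht hm
      by_cases hcl : k % 2 = 0 ∧ f k = f 0
      · exact ⟨f, k, hk, hcl.1, hcl.2, ht⟩
      · have hopen : k % 2 = 1 ∨ (k % 2 = 0 ∧ f k ≠ f 0) := by
          rcases Nat.mod_two_eq_zero_or_one k with h | h
          · exact Or.inr ⟨h, fun hh => hcl ⟨h, hh⟩⟩
          · exact Or.inl h
        obtain ⟨g, hg⟩ := trail_extend hd hbal hloop ht hopen
        exact ih g (k+1) (by omega) hg (by omega)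
  exact aux ((R ∪ B).card + 1) _ 1 one_pos hstart (by omega)

lemma circ_of_closed {R B : Finset (Sym2 V)} {f : ℕ → V} {n : ℕ}
    (h0 : 0 < n) (he : n % 2 = 0) (hc : f n = f 0) (ht : TrailP R B f n) :
    CircP R B f n := by
  have hce : ∀ i < n, ce f n i = te f i := by
    intro i hi
    unfold ce te
    rcases eq_or_lt_of_le (Nat.succ_le_of_lt hi) with h | h
    · have h1 : (i+1) % n = 0 := by rw [← h]; exact Nat.mod_self _
      rw [h1, ← hc, ← h]
    · rw [Nat.mod_eq_of_lt h]
  refine ⟨h0, he, ?_, ?_⟩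
  · intro i j hi hj hij
    exact ht.1 i j hi hj (by rwa [hce i hi, hce j hj] at hij)
  · intro i hi
    rw [hce i hi]
    exact ht.2 i hi

lemma mod_two_of_even_mod {x n : ℕ} (he : n % 2 = 0) : x % n % 2 = x % 2 :=
  Nat.mod_mod_of_dvd x (Nat.dvd_of_mod_eq_zero he)

lemma ce_shift {f : ℕ → V} {n : ℕ} (r i : ℕ) :
    ce (fun t => f ((r + t) % n)) n i = ce f n ((r + i) % n) := by
  unfold ce
  have a1 : (r + (i+1) % n) % n = ((r + i) % n + 1) % n := by
    rw [Nat.add_mod_mod, Nat.mod_add_mod, Nat.add_assoc]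
  show s(f ((r + i) % n), f ((r + (i+1) % n) % n)) = s(f ((r + i) % n), f (((r + i) % n + 1) % n))
  rw [a1]

lemma shift_inj {n r : ℕ} : ∀ i j, i < n → j < n → (r + i) % n = (r + j) % n → i = j := by
  intro i j hi hj hij
  have h1 : (r + i) ≡ (r + j) [MOD n] := hij
  have h2 := Nat.ModEq.add_left_cancel' r h1
  have h3 : i % n = j % n := h2
  rwa [Nat.mod_eq_of_lt hi, Nat.mod_eq_of_lt hj] at h3

lemma circ_shift_even {R B : Finset (Sym2 V)} {f : ℕ → V} {n : ℕ}
    (h : CircP R B f n) {r : ℕ} (hr : r % 2 = 0) :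
    CircP R B (fun t => f ((r + t) % n)) n := by
  obtain ⟨h0, he, hinj, hpar⟩ := h
  refine ⟨h0, he, ?_, ?_⟩
  · intro i j hi hj hij
    rw [ce_shift r i, ce_shift r j] at hij
    exact shift_inj i j hi hj
      (hinj _ _ (Nat.mod_lt _ h0) (Nat.mod_lt _ h0) hij)
  · intro i hi
    rw [ce_shift r i]
    have hp : (r + i) % n % 2 = i % 2 := by
      rw [mod_two_of_even_mod he]
      omega
    exact ⟨fun hh => (hpar _ (Nat.mod_lt _ h0)).1 (by rw [hp]; exact hh),
      fun hh => (hpar _ (Nat.mod_lt _ h0)).2 (by rw [hp]; exact hh)⟩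


lemma circ_shift_odd {R B : Finset (Sym2 V)} {f : ℕ → V} {n : ℕ}
    (h : CircP R B f n) {r : ℕ} (hr : r % 2 = 1) :
    CircP B R (fun t => f ((r + t) % n)) n := by
  obtain ⟨h0, he, hinj, hpar⟩ := h
  refine ⟨h0, he, ?_, ?_⟩
  · intro i j hi hj hij
    rw [ce_shift r i, ce_shift r j] at hij
    exact shift_inj i j hi hj
      (hinj _ _ (Nat.mod_lt _ h0) (Nat.mod_lt _ h0) hij)
  · intro i hi
    rw [ce_shift r i]
    have hp : (r + i) % n % 2 = (i + 1) % 2 := by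
      rw [mod_two_of_even_mod he]
      omega
    exact ⟨fun hh => (hpar _ (Nat.mod_lt _ h0)).2 (by rw [hp]; omega),
      fun hh => (hpar _ (Nat.mod_lt _ h0)).1 (by rw [hp]; omega)⟩

lemma circ_trunc {R B : Finset (Sym2 V)} {f : ℕ → V} {n : ℕ}
    (h : CircP R B f n) {m : ℕ} (h0 : 0 < m) (hm : m < n) (he : m % 2 = 0)
    (hf : f m = f 0) : CircP R B f m := by
  obtain ⟨hn0, hne, hinj, hpar⟩ := h
  have key : ∀ i < m, ce f m i = ce f n i := by
    intro i hi
    unfold ce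
    rcases eq_or_lt_of_le (Nat.succ_le_of_lt hi) with h1 | h1
    · have e1 : (i+1) % m = 0 := by rw [← h1]; exact Nat.mod_self _
      have e2 : (i+1) % n = m := by rw [← h1] at hm ⊢; exact Nat.mod_eq_of_lt hm
      rw [e1, e2, hf]
    · rw [Nat.mod_eq_of_lt h1, Nat.mod_eq_of_lt (h1.trans hm)]
  refine ⟨h0, he, ?_, ?_⟩
  · intro i j hi hj hij
    exact hinj i j (hi.trans hm) (hj.trans hm) (by rwa [key i hi, key j hj] at hij)
  · intro i hi
    rw [key i hi]
    exact hpar i (hi.trans hm)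

lemma circ_shrink {R B : Finset (Sym2 V)} {f : ℕ → V} {n : ℕ}
    (hf : CircP R B f n) {i j : ℕ} {v : V} (hij : i < j) (hj : j < n)
    (hiv : f i = v) (hjv : f j = v) (hpar : i % 2 = j % 2) :
    ∃ g : ℕ → V, CircP R B g (j - i) := by
  have hn0 : 0 < n := hf.1
  have hne : n % 2 = 0 := hf.2.1
  have hm0 : 0 < j - i := by omega
  have hmn : j - i < n := by omega
  have hme : (j - i) % 2 = 0 := by omega
  have hvals : f ((i + (j - i)) % n) = f ((i + 0) % n) := by
    have e1 : (i + (j - i)) % n = j := by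
      rw [show i + (j - i) = j by omega]
      exact Nat.mod_eq_of_lt hj
    have e2 : (i + 0) % n = i := by
      rw [Nat.add_zero]
      exact Nat.mod_eq_of_lt (hij.trans hj)
    rw [e1, e2, hiv, hjv]
  rcases Nat.mod_two_eq_zero_or_one i with hie | hio
  · have h1 : CircP R B (fun t => f ((i + t) % n)) n := circ_shift_even hf hie
    exact ⟨_, circ_trunc h1 hm0 hmn hme hvals⟩
  · have h1 : CircP B R (fun t => f ((i + t) % n)) n := circ_shift_odd hf hio
    have h2 : CircP B R (fun t => f ((i + t) % n)) (j - i) :=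
      circ_trunc h1 hm0 hmn hme hvals
    exact ⟨_, circ_shift_odd h2 (by norm_num : 1 % 2 = 1)⟩

lemma circ_min {R B : Finset (Sym2 V)}
    (hex : ∃ n : ℕ, ∃ f : ℕ → V, CircP R B f n) :
    ∃ n : ℕ, ∃ f : ℕ → V, CircP R B f n ∧
      ∀ v : V, ((range n).filter (fun i => f i = v)).card ≤ 2 := by
  classical
  obtain ⟨f, hf⟩ := Nat.find_spec hex
  set n := Nat.find hex with hn
  refine ⟨n, f, hf, ?_⟩
  intro v
  by_contra hv
  push_neg at hv
  have hmaps : ∀ i ∈ (range n).filter (fun i => f i = v), i % 2 ∈ range 2 := by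
    intro i _
    simp only [mem_range]
    omega
  obtain ⟨a, ha, b, hb, hab, hpar⟩ :=
    Finset.exists_ne_map_eq_of_card_lt_of_maps_to (by simpa using hv) hmaps
  simp only [mem_filter, mem_range] at ha hb
  have hshrink : ∀ a b : ℕ, a < b → b < n → f a = v → f b = v → a % 2 = b % 2 → False := by
    intro a b hlt hbn hav hbv hp
    obtain ⟨g, hg⟩ := circ_shrink hf hlt hbn hav hbv hp
    exact Nat.find_min hex (show b - a < n by omega) ⟨g, hg⟩
  rcases Nat.lt_or_ge a b with h | h
  · exact hshrink a b h hb.1 ha.2 hb.2 hpar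
  · exact hshrink b a (by omega) ha.1 hb.2 ha.2 hpar.symm

lemma count_shift_succ (f : ℕ → V) (n : ℕ) (hn : 0 < n) (he : n % 2 = 0) (v : V)
    (p : ℕ) (hp : p < 2) :
    ((range n).filter (fun i => i % 2 = p ∧ f ((i+1) % n) = v)).card
      = ((range n).filter (fun j => j % 2 = (p+1) % 2 ∧ f j = v)).card := by
  apply Finset.card_nbij' (fun i => (i+1) % n) (fun j => (j + (n-1)) % n)
  · intro i hi
    simp only [mem_coe, mem_filter, mem_range] at hi ⊢
    refine ⟨Nat.mod_lt _ hn, ?_, hi.2.2⟩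
    rw [mod_two_of_even_mod he]
    omega
  · intro j hj
    simp only [mem_coe, mem_filter, mem_range] at hj ⊢
    have e1 : ((j + (n-1)) % n + 1) % n = j := by
      rw [Nat.mod_add_mod, show j + (n-1) + 1 = j + n by omega, Nat.add_mod_right,
        Nat.mod_eq_of_lt hj.1]
    refine ⟨Nat.mod_lt _ hn, ?_, by rw [e1]; exact hj.2.2⟩
    rw [mod_two_of_even_mod he]
    omega
  · intro i hi
    simp only [mem_coe, mem_filter, mem_range] at hi
    beta_reduce
    rw [Nat.mod_add_mod, show i + 1 + (n-1) = i + n by omega, Nat.add_mod_right,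
      Nat.mod_eq_of_lt hi.1]
  · intro j hj
    simp only [mem_coe, mem_filter, mem_range] at hj
    beta_reduce
    rw [Nat.mod_add_mod, show j + (n-1) + 1 = j + n by omega, Nat.add_mod_right,
      Nat.mod_eq_of_lt hj.1]

lemma circ_nonloop {R B : Finset (Sym2 V)} {f : ℕ → V} {n : ℕ}
    (h : CircP R B f n) (hloop : ∀ e ∈ R ∪ B, ¬ e.IsDiag) :
    ∀ i < n, f i ≠ f ((i+1) % n) := by
  intro i hi
  have h2 := h.2.2.2 i hi
  have : ce f n i ∈ R ∪ B := by
    rcases Nat.mod_two_eq_zero_or_one i with hh | hh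
    · exact mem_union_left _ (h2.1 hh)
    · exact mem_union_right _ (h2.2 hh)
  have := hloop _ this
  rwa [ce, Sym2.mk_isDiag_iff] at this

lemma circ_inc_balance {R B : Finset (Sym2 V)} {f : ℕ → V} {n : ℕ}
    (h : CircP R B f n) (hloop : ∀ e ∈ R ∪ B, ¬ e.IsDiag) (v : V) :
    ((range n).filter (fun i => i % 2 = 0 ∧ v ∈ ce f n i)).card
      = ((range n).filter (fun i => i % 2 = 1 ∧ v ∈ ce f n i)).card := by
  have hn0 : 0 < n := h.1
  have hne : n % 2 = 0 := h.2.1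
  have hnl := circ_nonloop h hloop
  have hsplit : ∀ p, ((range n).filter (fun i => i % 2 = p ∧ v ∈ ce f n i)).card
      = ((range n).filter (fun i => i % 2 = p ∧ f i = v)).card
        + ((range n).filter (fun i => i % 2 = p ∧ f ((i+1) % n) = v)).card := by
    intro p
    have heq : ∀ i ∈ range n, (i % 2 = p ∧ v ∈ ce f n i)
        ↔ ((i % 2 = p ∧ f i = v) ∨ (i % 2 = p ∧ f ((i+1) % n) = v)) := by
      intro i _
      rw [ce, Sym2.mem_iff]
      constructor
      · rintro ⟨h1, h2 | h2⟩
        · exact Or.inl ⟨h1, h2.symm⟩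
        · exact Or.inr ⟨h1, h2.symm⟩
      · rintro (⟨h1, h2⟩ | ⟨h1, h2⟩)
        · exact ⟨h1, Or.inl h2.symm⟩
        · exact ⟨h1, Or.inr h2.symm⟩
    rw [filter_congr heq, Finset.filter_or, Finset.card_union_of_disjoint]
    rw [Finset.disjoint_filter]
    intro i hi h1 h2
    simp only [mem_range] at hi
    exact hnl i hi (h1.2.trans h2.2.symm)
  rw [hsplit 0, hsplit 1,
    count_shift_succ f n hn0 hne v 0 (by norm_num),
    count_shift_succ f n hn0 hne v 1 (by norm_num)]
  norm_num
  omega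

lemma inter_image_filter_card {S : Finset (Sym2 V)} {f : ℕ → V} {n : ℕ} {p : ℕ}
    (hinj : ∀ i j, i < n → j < n → ce f n i = ce f n j → i = j)
    (hiff : ∀ i < n, (ce f n i ∈ S ↔ i % 2 = p)) (v : V) :
    ((S ∩ (range n).image (ce f n)).filter (v ∈ ·)).card
      = ((range n).filter (fun i => i % 2 = p ∧ v ∈ ce f n i)).card := by
  have himg : (S ∩ (range n).image (ce f n)).filter (v ∈ ·)
      = ((range n).filter (fun i => i % 2 = p ∧ v ∈ ce f n i)).image (ce f n) := by
    ext e
    simp only [mem_filter, mem_inter, mem_image, mem_range]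
    constructor
    · rintro ⟨⟨hS, i, hi, rfl⟩, hv⟩
      exact ⟨i, ⟨hi, (hiff i hi).1 hS, hv⟩, rfl⟩
    · rintro ⟨i, ⟨hi, hp2, hv⟩, rfl⟩
      exact ⟨⟨(hiff i hi).2 hp2, ⟨i, hi, rfl⟩⟩, hv⟩
  rw [himg, Finset.card_image_of_injOn]
  intro i hi j hj hij
  simp only [coe_filter, Set.mem_setOf_eq, mem_range] at hi hj
  exact hinj i j hi.1 hj.1 hij

lemma removed_balance {R B : Finset (Sym2 V)} {f : ℕ → V} {n : ℕ}
    (h : CircP R B f n) (hd : Disjoint R B) (hloop : ∀ e ∈ R ∪ B, ¬ e.IsDiag)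
    (hbal : ∀ v, (R.filter (v ∈ ·)).card = (B.filter (v ∈ ·)).card) (v : V) :
    (((R \ (range n).image (ce f n)).filter (v ∈ ·)).card
      = ((B \ (range n).image (ce f n)).filter (v ∈ ·)).card) := by
  set Ec := (range n).image (ce f n) with hEc
  have hsplit : ∀ S : Finset (Sym2 V), (S.filter (v ∈ ·)).card
      = ((S \ Ec).filter (v ∈ ·)).card + ((S ∩ Ec).filter (v ∈ ·)).card := by
    intro S
    rw [← Finset.card_union_of_disjoint, ← Finset.filter_union, Finset.sdiff_union_inter]
    exact (Finset.disjoint_sdiff_inter S Ec).mono (Finset.filter_subset _ _) (Finset.filter_subset _ _)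
  have hiffR : ∀ i < n, (ce f n i ∈ R ↔ i % 2 = 0) := by
    intro i hi
    constructor
    · intro hR
      rcases Nat.mod_two_eq_zero_or_one i with hp | hp
      · exact hp
      · exact absurd ((h.2.2.2 i hi).2 hp) (fun hB => Finset.disjoint_left.mp hd hR hB)
    · exact (h.2.2.2 i hi).1
  have hiffB : ∀ i < n, (ce f n i ∈ B ↔ i % 2 = 1) := by
    intro i hi
    constructor
    · intro hB
      rcases Nat.mod_two_eq_zero_or_one i with hp | hp
      · exact absurd ((h.2.2.2 i hi).1 hp) (fun hR => Finset.disjoint_left.mp hd hR hB)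
      · exact hp
    · exact (h.2.2.2 i hi).2
  have hR := hsplit R
  have hB := hsplit B
  rw [inter_image_filter_card h.2.2.1 hiffR v] at hR
  rw [inter_image_filter_card h.2.2.1 hiffB v] at hB
  have hib := circ_inc_balance h hloop v
  have := hbal v
  omega

def AltListP (R B : Finset (Sym2 V)) (c : List V) : Prop :=
  0 < c.length ∧ Even c.length ∧
  (∀ i j : Fin c.length, stepEdge c i = stepEdge c j → i = j) ∧
  (∀ i : Fin c.length, i.val % 2 = 0 → stepEdge c i ∈ R) ∧
  (∀ i : Fin c.length, i.val % 2 = 1 → stepEdge c i ∈ B) ∧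
  (∀ v : V, {i : Fin c.length | c.get i = v}.ncard ≤ 2)

lemma altListP_mono {R B R2 B2 : Finset (Sym2 V)} {c : List V}
    (hR : R ⊆ R2) (hB : B ⊆ B2) (h : AltListP R B c) : AltListP R2 B2 c :=
  ⟨h.1, h.2.1, h.2.2.1, fun i hi => hR (h.2.2.2.1 i hi),
    fun i hi => hB (h.2.2.2.2.1 i hi), h.2.2.2.2.2⟩

lemma conv {R B : Finset (Sym2 V)} {f : ℕ → V} {n : ℕ} (h : CircP R B f n)
    (hb : ∀ v, ((range n).filter (fun i => f i = v)).card ≤ 2) :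
    ∃ c : List V, AltListP R B c ∧
      circuitEdges c = ↑((range n).image (ce f n)) := by
  classical
  set c := (List.range n).map f with hc
  have hlen : c.length = n := by simp [hc]
  have hget : ∀ i : Fin c.length, c.get i = f i.val := by
    intro i
    simp [hc, List.get_eq_getElem]
  have hstep : ∀ i : Fin c.length, stepEdge c i = ce f n i.val := by
    intro i
    simp only [stepEdge, hget, ce]
    have hmod : ((i : ℕ) + 1) % c.length = ((i : ℕ) + 1) % n :=
      congrArg (HMod.hMod ((i : ℕ) + 1)) hlen
    rw [hmod]
  refine ⟨c, ⟨hlen ▸ h.1, ?_, ?_, ?_, ?_, ?_⟩, ?_⟩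
  · rw [hlen]
    exact Nat.even_iff.mpr h.2.1
  · intro i j hij
    rw [hstep i, hstep j] at hij
    exact Fin.ext (h.2.2.1 i.val j.val (hlen ▸ i.isLt) (hlen ▸ j.isLt) hij)
  · intro i hi
    rw [hstep i]
    exact (h.2.2.2 i.val (hlen ▸ i.isLt)).1 hi
  · intro i hi
    rw [hstep i]
    exact (h.2.2.2 i.val (hlen ▸ i.isLt)).2 hi
  · intro v
    have h1 : {i : Fin c.length | c.get i = v}.ncard
        = (Finset.univ.filter (fun i : Fin c.length => c.get i = v)).card := by
      rw [Set.ncard_eq_toFinset_card']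
      congr 1
      ext i
      simp
    rw [h1]
    refine le_trans (le_of_eq ?_) (hb v)
    apply Finset.card_nbij (fun i : Fin c.length => (i : ℕ))
    · intro a ha
      simp only [mem_coe, mem_filter, mem_univ, true_and, mem_range] at ha ⊢
      exact ⟨hlen ▸ a.isLt, by rw [← hget a]; exact ha⟩
    · intro a _ b _ hab
      exact Fin.ext hab
    · intro i hi
      simp only [coe_filter, Set.mem_setOf_eq, mem_range] at hi
      refine ⟨⟨i, hlen ▸ hi.1⟩, ?_, rfl⟩
      simp only [mem_coe, mem_filter, mem_univ, true_and]
      rw [hget]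
      exact hi.2
  · ext e
    simp only [circuitEdges, Set.mem_range, Finset.coe_image, Set.mem_image, mem_coe,
      mem_range, Finset.coe_range, Set.mem_Iio]
    constructor
    · rintro ⟨i, rfl⟩
      exact ⟨i.val, hlen ▸ i.isLt, (hstep i).symm⟩
    · rintro ⟨i, hi, rfl⟩
      exact ⟨⟨i, hlen ▸ hi⟩, hstep _⟩

lemma decomp : ∀ (N : ℕ) (R B : Finset (Sym2 V)), (R ∪ B).card ≤ N → Disjoint R B →
    (∀ e ∈ R ∪ B, ¬ e.IsDiag) →
    (∀ v, (R.filter (v ∈ ·)).card = (B.filter (v ∈ ·)).card) →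
    ∃ 𝒞 : Finset (List V), (∀ c ∈ 𝒞, AltListP R B c) ∧
      (∀ c ∈ 𝒞, ∀ c' ∈ 𝒞, c ≠ c' → Disjoint (circuitEdges c) (circuitEdges c')) ∧
      (⋃ c ∈ 𝒞, circuitEdges c) = ↑R ∪ ↑B := by
  intro N
  induction N with
  | zero =>
    intro R B hcard hd hloop hbal
    have hRB : R = ∅ ∧ B = ∅ := by
      rw [← Finset.union_eq_empty]
      exact Finset.card_eq_zero.mp (Nat.le_zero.mp hcard)
    exact ⟨∅, by simp, by simp, by simp [hRB.1, hRB.2]⟩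
  | succ N ih =>
    intro R B hcard hd hloop hbal
    by_cases hRE : R = ∅
    · have hBE : B = ∅ := by
        by_contra hBE
        obtain ⟨e, he⟩ := Finset.nonempty_iff_ne_empty.mpr hBE
        obtain ⟨x, hx⟩ : ∃ x, x ∈ e := by
          induction e using Sym2.ind with | _ x y =>
          exact ⟨x, Sym2.mem_iff.mpr (Or.inl rfl)⟩
        have hx2 : (B.filter (x ∈ ·)).card ≠ 0 :=
          Finset.card_ne_zero_of_mem (Finset.mem_filter.mpr ⟨he, hx⟩)
        have := hbal x
        simp [hRE] at this
        exact hx2 this.symm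
      exact ⟨∅, by simp, by simp, by simp [hRE, hBE]⟩
    · have hRne : R.Nonempty := Finset.nonempty_iff_ne_empty.mpr hRE
      obtain ⟨f0, n0, hn0, hne0, hcl, htr⟩ := exists_closed_trail hd hbal hloop hRne
      have hex : ∃ n : ℕ, ∃ f : ℕ → V, CircP R B f n :=
        ⟨n0, f0, circ_of_closed hn0 hne0 hcl htr⟩
      obtain ⟨n, f, hf, hb2⟩ := circ_min hex
      set Ec := (range n).image (ce f n) with hEcdef
      have hEc_sub : Ec ⊆ R ∪ B := by
        intro e he
        rw [hEcdef] at he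
        obtain ⟨i, hi, rfl⟩ := Finset.mem_image.mp he
        rw [mem_range] at hi
        rcases Nat.mod_two_eq_zero_or_one i with hp | hp
        · exact mem_union_left _ ((hf.2.2.2 i hi).1 hp)
        · exact mem_union_right _ ((hf.2.2.2 i hi).2 hp)
      have hce0 : ce f n 0 ∈ Ec :=
        Finset.mem_image_of_mem _ (mem_range.mpr hf.1)
      obtain ⟨c, hALP, hCE⟩ := conv hf hb2
      have hbal' : ∀ v, ((R \ Ec).filter (v ∈ ·)).card = ((B \ Ec).filter (v ∈ ·)).card :=
        removed_balance hf hd hloop hbal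
      have hd' : Disjoint (R \ Ec) (B \ Ec) :=
        Finset.disjoint_of_subset_left (Finset.sdiff_subset)
          (Finset.disjoint_of_subset_right (Finset.sdiff_subset) hd)
      have hsub : (R \ Ec) ∪ (B \ Ec) ⊆ R ∪ B :=
        Finset.union_subset_union Finset.sdiff_subset Finset.sdiff_subset
      have hloop' : ∀ e ∈ (R \ Ec) ∪ (B \ Ec), ¬ e.IsDiag := fun e he => hloop e (hsub he)
      have hcenot : ce f n 0 ∉ (R \ Ec) ∪ (B \ Ec) := by
        intro hmem
        rcases Finset.mem_union.mp hmem with hmem | hmem <;>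
          exact (Finset.mem_sdiff.mp hmem).2 hce0
      have hcard' : ((R \ Ec) ∪ (B \ Ec)).card ≤ N := by
        have hss : (R \ Ec) ∪ (B \ Ec) ⊂ R ∪ B :=
          ⟨hsub, fun hsup => hcenot (hsup (hEc_sub hce0))⟩
        have := Finset.card_lt_card hss
        omega
      obtain ⟨𝒞', h1', h2', h3'⟩ := ih (R \ Ec) (B \ Ec) hcard' hd' hloop' hbal'
      have hcirc_sub : ∀ c' ∈ 𝒞', circuitEdges c' ⊆ ↑(R \ Ec) ∪ ↑(B \ Ec) := by
        intro c' hc'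
        rw [← h3']
        exact Set.subset_biUnion_of_mem hc'
      have hdisjEc : ∀ c' ∈ 𝒞', Disjoint (circuitEdges c) (circuitEdges c') := by
        intro c' hc'
        rw [hCE, Set.disjoint_left]
        intro e heEc hec'
        have h := hcirc_sub c' hc' hec'
        rcases h with h | h <;>
          exact (Finset.mem_sdiff.mp h).2 (Finset.mem_coe.mp heEc)
      have hcnotin : c ∉ 𝒞' := by
        intro hmem
        have h1 : ce f n 0 ∈ circuitEdges c := by
          rw [hCE]
          exact Finset.mem_coe.mpr hce0
        exact Set.disjoint_left.mp (hdisjEc c hmem) h1 h1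
      refine ⟨insert c 𝒞', ?_, ?_, ?_⟩
      · intro c' hc'
        rcases Finset.mem_insert.mp hc' with rfl | hc'
        · exact hALP
        · exact altListP_mono Finset.sdiff_subset Finset.sdiff_subset (h1' c' hc')
      · intro a ha b hb hab
        rcases Finset.mem_insert.mp ha with ha' | ha'
        · rcases Finset.mem_insert.mp hb with hb' | hb'
          · exact absurd (ha'.trans hb'.symm) hab
          · subst ha'
            exact hdisjEc _ hb'
        · rcases Finset.mem_insert.mp hb with hb' | hb'
          · subst hb'
            exact (hdisjEc _ ha').symm
          · exact h2' _ ha' _ hb' hab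
      · rw [Finset.set_biUnion_insert, h3', hCE]
        ext e
        simp only [Set.mem_union, mem_coe, Finset.mem_sdiff]
        constructor
        · rintro (h | ⟨h, _⟩ | ⟨h, _⟩)
          · exact Finset.mem_union.mp (hEc_sub h)
          · exact Or.inl h
          · exact Or.inr h
        · intro hh
          by_cases hEce : e ∈ Ec
          · exact Or.inl hEce
          · rcases hh with hh | hh
            · exact Or.inr (Or.inl ⟨hh, hEce⟩)
            · exact Or.inr (Or.inr ⟨hh, hEce⟩)

end AltAux

section MainProof

open Finset in
theorem symmDiff_altCircuit_decomposition' {V : Type*} [Fintype V] [DecidableEq V]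
    (G G' : SimpleGraph V)
    (hdeg : ∀ v, gdeg G v = gdeg G' v) :
    ∃ 𝒞 : Finset (List V), IsAltCircuitDecomp G G' 𝒞 := by
  classical
  have hRf : (G.edgeSet \ G'.edgeSet).Finite := Set.toFinite _
  have hBf : (G'.edgeSet \ G.edgeSet).Finite := Set.toFinite _
  set R := hRf.toFinset with hRdef
  set B := hBf.toFinset with hBdef
  have hRm : ∀ e, e ∈ R ↔ e ∈ G.edgeSet \ G'.edgeSet := fun e => hRf.mem_toFinset
  have hBm : ∀ e, e ∈ B ↔ e ∈ G'.edgeSet \ G.edgeSet := fun e => hBf.mem_toFinset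
  have hd : Disjoint R B := by
    rw [Finset.disjoint_left]
    intro e heR heB
    exact ((hBm e).mp heB).2 ((hRm e).mp heR).1
  have hloop : ∀ e ∈ R ∪ B, ¬ e.IsDiag := by
    intro e he
    rcases Finset.mem_union.mp he with he | he
    · exact G.not_isDiag_of_mem_edgeSet ((hRm e).mp he).1
    · exact G'.not_isDiag_of_mem_edgeSet ((hBm e).mp he).1
  have hinc : ∀ (H : SimpleGraph V) (v : V), (H.incidenceSet v).ncard = gdeg H v := by
    intro H v
    rw [gdeg, ← Nat.card_coe_set_eq, ← Nat.card_coe_set_eq]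
    exact Nat.card_congr (H.incidenceSetEquivNeighborSet v)
  have hsum : ∀ (s t : Set (Sym2 V)), s.Finite →
      (s \ t).ncard + (s ∩ t).ncard = s.ncard := by
    intro s t hs
    rw [← Set.ncard_union_eq (Set.disjoint_left.mpr fun e he1 he2 => he1.2 he2.2)
      hs.diff (hs.inter_of_left t), Set.diff_union_inter]
  have hfiltR : ∀ v : V, ((R.filter (v ∈ ·)) : Set (Sym2 V))
      = G.incidenceSet v \ G'.incidenceSet v := by
    intro v
    ext e
    simp only [Finset.coe_filter, Set.mem_setOf_eq, hRm, Set.mem_diff,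
      SimpleGraph.incidenceSet, Set.mem_sep_iff]
    tauto
  have hfiltB : ∀ v : V, ((B.filter (v ∈ ·)) : Set (Sym2 V))
      = G'.incidenceSet v \ G.incidenceSet v := by
    intro v
    ext e
    simp only [Finset.coe_filter, Set.mem_setOf_eq, hBm, Set.mem_diff,
      SimpleGraph.incidenceSet, Set.mem_sep_iff]
    tauto
  have hbal : ∀ v, (R.filter (v ∈ ·)).card = (B.filter (v ∈ ·)).card := by
    intro v
    have e1 : (R.filter (v ∈ ·)).card = (G.incidenceSet v \ G'.incidenceSet v).ncard := by
      rw [← Set.ncard_coe_finset, hfiltR v]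
    have e2 : (B.filter (v ∈ ·)).card = (G'.incidenceSet v \ G.incidenceSet v).ncard := by
      rw [← Set.ncard_coe_finset, hfiltB v]
    have s1 := hsum (G.incidenceSet v) (G'.incidenceSet v) (Set.toFinite _)
    have s2 := hsum (G'.incidenceSet v) (G.incidenceSet v) (Set.toFinite _)
    have hcomm : (G.incidenceSet v ∩ G'.incidenceSet v).ncard
        = (G'.incidenceSet v ∩ G.incidenceSet v).ncard := by rw [Set.inter_comm]
    have d1 := hinc G v
    have d2 := hinc G' v
    have := hdeg v
    omega
  obtain ⟨𝒞, h1, h2, h3⟩ := AltAux.decomp ((R ∪ B).card) R B le_rfl hd hloop hbal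
  refine ⟨𝒞, ?_, h2, ?_⟩
  · intro c hc
    obtain ⟨p1, p2, p3, p4, p5, p6⟩ := h1 c hc
    exact ⟨p1, p2, p3, fun i hi => (hRm _).mp (p4 i hi),
      fun i hi => (hBm _).mp (p5 i hi), p6⟩
  · rw [h3, Set.symmDiff_def]
    have : (R : Set (Sym2 V)) = G.edgeSet \ G'.edgeSet := hRf.coe_toFinset
    have hB' : (B : Set (Sym2 V)) = G'.edgeSet \ G.edgeSet := hBf.coe_toFinset
    rw [this, hB']

end MainProof

/-- The symmetric difference of two distinct realizations of the same degree sequence can be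
decomposed into alternating circuits. -/
theorem symmDiff_altCircuit_decomposition {V : Type*} [Fintype V] (G G' : SimpleGraph V)
    (hne : G ≠ G') (hdeg : ∀ v, gdeg G v = gdeg G' v) :
    ∃ 𝒞 : Finset (List V), IsAltCircuitDecomp G G' 𝒞 := by
  classical
  exact symmDiff_altCircuit_decomposition' G G' hdeg
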